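/- arXiv:1909.08333 — 6 statements merged into one kernel-verified Lean document; each statement's English description precedes it below -/
import Mathlib

section
/- Let $\alpha,\beta,\gamma \ge 0$ with $\beta \ge 1$, and let $(e_k^N)_{k\ge 0, N\ge 0}$ be a family of nonnegative reals satisfying: $e_k^0 = 0$ for all $k \ge 0$; $e_0^N = \beta e_0^{N-1} + \gamma$ for all $N \ge 1$; and $e_k^N = \alpha e_{k-1}^{N-1} + \beta e_k^{N-1}$ for all $k \ge 1$, $N \ge 1$. Then for all $k \ge 0$ and $N \ge 0$, $e_k^N \le \gamma\, \alpha^k\, \beta^{N-k-1} \binom{N}{k+1}$ (where the inequality is interpreted with $\beta^{N-k-1} := \beta^{N-k-1}$ whenever $N \ge k+1$, and the right-hand side is $0$ when $N \le k$ since $\binom{N}{k+1}=0$; in the case $N = k+1$ the exponent $N-k-1 = 0$). -/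
open Finset

theorem parareal_ideal_recursion_bound
    (α β γ : ℝ) (hα : 0 ≤ α) (hβ : 1 ≤ β) (hγ : 0 ≤ γ)
    (e : ℕ → ℕ → ℝ) (he_nonneg : ∀ k N, 0 ≤ e k N)
    (h0 : ∀ k, e k 0 = 0)
    (hrec0 : ∀ N, e 0 (N + 1) = β * e 0 N + γ)
    (hrec : ∀ k N, e (k + 1) (N + 1) = α * e k N + β * e (k + 1) N) :
    (∀ k N, N ≤ k → e k N = 0) ∧
      (∀ k N, k + 1 ≤ N →
        e k N ≤ γ * α ^ k * β ^ (N - (k + 1)) * (N.choose (k + 1) : ℝ)) := by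
  have hβ0 : (0:ℝ) ≤ β := le_trans zero_le_one hβ
  have h1 : ∀ N k, N ≤ k → e k N = 0 := by
    intro N
    induction N with
    | zero => intro k _; exact h0 k
    | succ N ih =>
      intro k hk
      obtain ⟨k', rfl⟩ : ∃ k', k = k' + 1 := ⟨k - 1, by omega⟩
      rw [hrec, ih k' (by omega), ih (k' + 1) (by omega)]; ring
  refine ⟨fun k N h => h1 N k h, ?_⟩
  have h2 : ∀ N k, k + 1 ≤ N →
      e k N ≤ γ * α ^ k * β ^ (N - (k + 1)) * (N.choose (k + 1) : ℝ) := by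
    intro N
    induction N with
    | zero => intro k hk; omega
    | succ N ih =>
      intro k hk
      match k with
      | 0 =>
        rw [hrec0]
        rcases Nat.eq_zero_or_pos N with rfl | hN
        · simp [h0]
        · have hih := ih 0 hN
          have hβN : (1:ℝ) ≤ β ^ N := one_le_pow₀ hβ
          have hpow : β * β ^ (N - 1) = β ^ N := by
            rw [← pow_succ']
            congr 1; omega
          calc β * e 0 N + γ
              ≤ β * (γ * α ^ 0 * β ^ (N - (0 + 1)) * (N.choose (0 + 1) : ℝ)) + γ := by
                have := mul_le_mul_of_nonneg_left hih hβ0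
                linarith
            _ = γ * (β * β ^ (N - 1)) * N + γ := by
                simp [Nat.choose_one_right]; ring
            _ ≤ γ * β ^ N * N + γ * β ^ N := by
                rw [hpow]
                have : γ * 1 ≤ γ * β ^ N := mul_le_mul_of_nonneg_left hβN hγ
                linarith
            _ = γ * α ^ 0 * β ^ (N + 1 - (0 + 1)) * ((N + 1).choose (0 + 1) : ℝ) := by
                simp [Nat.choose_one_right]; push_cast; ring
      | k' + 1 =>
        rw [hrec]
        rcases Nat.lt_or_ge N (k' + 2) with hN | hN
        · -- N = k' + 1
          have hNeq : N = k' + 1 := by omega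
          subst hNeq
          rw [h1 (k' + 1) (k' + 1) le_rfl]
          have hih := ih k' le_rfl
          have : α * e k' (k' + 1) ≤ α * (γ * α ^ k' * β ^ (k' + 1 - (k' + 1)) * ((k' + 1).choose (k' + 1) : ℝ)) :=
            mul_le_mul_of_nonneg_left hih hα
          simp only [Nat.sub_self, pow_zero, Nat.choose_self, Nat.cast_one] at this ⊢
          have : γ * α ^ (k' + 1) = α * (γ * α ^ k' * 1 * 1) := by rw [pow_succ]; ring
          linarith
        · have hih1 := ih k' (by omega)
          have hih2 := ih (k' + 1) hN
          have e1 : N - (k' + 1) = N - k' - 1 := by omega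
          have e2 : N + 1 - (k' + 2) = N - k' - 1 := by omega
          have e3 : β * β ^ (N - (k' + 2)) = β ^ (N - k' - 1) := by
            rw [← pow_succ']
            congr 1; omega
          calc α * e k' N + β * e (k' + 1) N
              ≤ α * (γ * α ^ k' * β ^ (N - (k' + 1)) * (N.choose (k' + 1) : ℝ))
                + β * (γ * α ^ (k' + 1) * β ^ (N - (k' + 1 + 1)) * (N.choose (k' + 1 + 1) : ℝ)) := by
                have := mul_le_mul_of_nonneg_left hih1 hα
                have := mul_le_mul_of_nonneg_left hih2 hβ0
                linarith
            _ = γ * α ^ (k' + 1) * β ^ (N - k' - 1) * ((N.choose (k' + 1) : ℝ) + (N.choose (k' + 2) : ℝ)) := by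
                rw [e1, ← e3]
                ring
            _ = γ * α ^ (k' + 1) * β ^ (N + 1 - (k' + 1 + 1)) * ((N + 1).choose (k' + 1 + 1) : ℝ) := by
                rw [e2, Nat.choose_succ_succ (N) (k' + 1)]
                push_cast
                ring
  exact fun k N h => h2 N k h
end

section
/- Let $\alpha, \beta, \gamma \ge 0$ with $\beta \ge 1$, let $(g_k)_{k \ge -1}$ be nonnegative reals with $g_{-1} = \gamma$, and let $(\tilde e_k^N)$ be nonnegative reals satisfying: $\tilde e_k^0 = 0$ for all $k$; $\tilde e_0^N = \beta \tilde e_0^{N-1} + \gamma$ for $N \ge 1$; and $\tilde e_k^N = \alpha \tilde e_{k-1}^{N-1} + \beta \tilde e_k^{N-1} + g_{k-1}$ for $k \ge 1$, $N \ge 1$. Then for all $k \ge 1$ and $N \ge 1$, $\tilde e_k^N \le \sum_{\ell=0}^{k} \alpha^{\ell}\, g_{k-1-\ell}\, \beta^{N-\ell-1} \binom{N}{\ell+1}$, where terms with $\ell+1 > N$ vanish since $\binom{N}{\ell+1}=0$. -/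
open Finset

theorem parareal_perturbed_recursion_bound
    (α β γ : ℝ) (hα : 0 ≤ α) (hβ : 1 ≤ β) (hγ : 0 ≤ γ)
    (g : ℕ → ℝ) (hg : ∀ k, 0 ≤ g k)
    (e : ℕ → ℕ → ℝ) (he_nonneg : ∀ k N, 0 ≤ e k N)
    (h0 : ∀ k, e k 0 = 0)
    (hrec0 : ∀ N, e 0 (N + 1) = β * e 0 N + γ)
    (hrec : ∀ k N, e (k + 1) (N + 1) = α * e k N + β * e (k + 1) N + g k) :
    ∀ k N, 1 ≤ k → 1 ≤ N →
      e k N ≤ ∑ ℓ ∈ range (k + 1),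
        α ^ ℓ * (if ℓ = k then γ else g (k - 1 - ℓ)) *
          β ^ (N - (ℓ + 1)) * (N.choose (ℓ + 1) : ℝ) := by
  have hβ0 : (0:ℝ) ≤ β := le_trans zero_le_one hβ
  have hpow : ∀ n : ℕ, (1:ℝ) ≤ β ^ n := fun n => one_le_pow₀ hβ
  have key : ∀ k N, e k N ≤ ∑ ℓ ∈ range (k + 1),
      α ^ ℓ * (if ℓ = k then γ else g (k - 1 - ℓ)) *
        β ^ (N - (ℓ + 1)) * (N.choose (ℓ + 1) : ℝ) := by
    intro k
    induction k with
    | zero =>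
      intro N
      simp only [zero_add, Finset.sum_range_one, pow_zero, one_mul, eq_self_iff_true, if_true]
      induction N with
      | zero =>
        rw [h0]
        positivity
      | succ N ihN =>
        rw [hrec0 N]
        have hC : ((N+1).choose 1 : ℝ) = (N.choose 1 : ℝ) + 1 := by
          simp [Nat.choose_one_right]
        rcases Nat.eq_zero_or_pos N with h | h
        · subst h; simp [h0]
        · have hexp : β * β ^ (N - 1) = β ^ N := by
            rw [← pow_succ']
            congr 1
            omega
          have hexp2 : (N + 1 - (0 + 1)) = N := by omega
          rw [hexp2, hC]
          have h1 : β * e 0 N ≤ β * (γ * β ^ (N - (0+1)) * (N.choose 1 : ℝ)) :=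
            mul_le_mul_of_nonneg_left ihN hβ0
          have h2 : β * (γ * β ^ (N - (0+1)) * (N.choose 1 : ℝ))
              = γ * β ^ N * (N.choose 1 : ℝ) := by
            rw [← hexp]; ring
          have h3 : γ ≤ γ * β ^ N := le_mul_of_one_le_right hγ (hpow N)
          nlinarith [h1, h2, h3]
    | succ k ihk =>
      intro N
      induction N with
      | zero =>
        rw [h0]
        apply Finset.sum_nonneg
        intro ℓ _
        have : (0:ℕ).choose (ℓ + 1) = 0 := Nat.choose_eq_zero_of_lt (by omega)
        simp [this]
      | succ N ihN =>
        rw [hrec k N]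
        set h : ℕ → ℝ := fun ℓ => if ℓ = k + 1 then γ else g (k + 1 - 1 - ℓ) with hh
        -- Pascal decomposition of the target
        have hsplit : (∑ ℓ ∈ range (k + 2),
            α ^ ℓ * h ℓ * β ^ (N + 1 - (ℓ + 1)) * ((N+1).choose (ℓ + 1) : ℝ))
            = (∑ ℓ ∈ range (k + 2), α ^ ℓ * h ℓ * β ^ (N - ℓ) * (N.choose (ℓ + 1) : ℝ))
            + (∑ ℓ ∈ range (k + 2), α ^ ℓ * h ℓ * β ^ (N - ℓ) * (N.choose ℓ : ℝ)) := by
          rw [← Finset.sum_add_distrib]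
          apply Finset.sum_congr rfl
          intro ℓ _
          have h1 : N + 1 - (ℓ + 1) = N - ℓ := by omega
          have h2 : (N+1).choose (ℓ+1) = N.choose ℓ + N.choose (ℓ+1) :=
            Nat.choose_succ_succ N ℓ
          rw [h1, h2]
          push_cast
          ring
        -- β * S(k+1) N equals the first sum
        have hA : β * (∑ ℓ ∈ range (k + 2),
            α ^ ℓ * h ℓ * β ^ (N - (ℓ + 1)) * (N.choose (ℓ + 1) : ℝ))
            = ∑ ℓ ∈ range (k + 2), α ^ ℓ * h ℓ * β ^ (N - ℓ) * (N.choose (ℓ + 1) : ℝ) := by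
          rw [Finset.mul_sum]
          apply Finset.sum_congr rfl
          intro ℓ _
          rcases le_or_gt (ℓ + 1) N with hle | hlt
          · have : β * β ^ (N - (ℓ+1)) = β ^ (N - ℓ) := by
              rw [← pow_succ']
              congr 1
              omega
            rw [← this]; ring
          · have : N.choose (ℓ + 1) = 0 := Nat.choose_eq_zero_of_lt hlt
            simp [this]
        -- α * S k N equals the tail of the second sum
        have hB : (∑ ℓ ∈ range (k + 2), α ^ ℓ * h ℓ * β ^ (N - ℓ) * (N.choose ℓ : ℝ))
            = (∑ ℓ ∈ range (k + 1),
                α * (α ^ ℓ * (if ℓ = k then γ else g (k - 1 - ℓ)) *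
                  β ^ (N - (ℓ + 1)) * (N.choose (ℓ + 1) : ℝ)))
              + g k * β ^ N := by
          rw [Finset.sum_range_succ']
          congr 1
          · apply Finset.sum_congr rfl
            intro ℓ hℓ
            have hℓk : ℓ < k + 1 := Finset.mem_range.mp hℓ
            have hhl : h (ℓ + 1) = (if ℓ = k then γ else g (k - 1 - ℓ)) := by
              rw [hh]
              by_cases hc : ℓ = k
              · simp [hc]
              · have hne : ℓ + 1 ≠ k + 1 := by omega
                simp only [if_neg hne, if_neg hc]
                congr 1
                omega
            rw [hhl, pow_succ]
            ring
          · have hh0 : h 0 = g k := by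
              rw [hh]
              have : (0:ℕ) ≠ k + 1 := by omega
              simp [this]
            rw [hh0]
            simp
        rw [show (fun ℓ => α ^ ℓ * (if ℓ = k + 1 then γ else g (k + 1 - 1 - ℓ)) *
              β ^ (N + 1 - (ℓ + 1)) * ((N+1).choose (ℓ + 1) : ℝ))
            = (fun ℓ => α ^ ℓ * h ℓ * β ^ (N + 1 - (ℓ + 1)) * ((N+1).choose (ℓ + 1) : ℝ))
            from rfl] at *
        rw [hsplit, hB]
        have hαe : α * e k N ≤ ∑ ℓ ∈ range (k + 1),
            α * (α ^ ℓ * (if ℓ = k then γ else g (k - 1 - ℓ)) *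
              β ^ (N - (ℓ + 1)) * (N.choose (ℓ + 1) : ℝ)) := by
          rw [← Finset.mul_sum]
          exact mul_le_mul_of_nonneg_left (ihk N) hα
        have hβe : β * e (k + 1) N ≤ ∑ ℓ ∈ range (k + 2),
            α ^ ℓ * h ℓ * β ^ (N - ℓ) * (N.choose (ℓ + 1) : ℝ) := by
          rw [← hA]
          exact mul_le_mul_of_nonneg_left ihN hβ0
        have hgk : g k ≤ g k * β ^ N := le_mul_of_one_le_right (hg k) (hpow N)
        linarith [hαe, hβe, hgk]
  intro k N _ _
  exact key k N
end

section
/- Let $\mathbb{U}$ be a Banach space, $\Delta T > 0$, $\underline{N} \ge 1$, $T = \underline{N}\,\Delta T$, and $T_N = N \Delta T$. Let $\mathcal{E}, \mathcal{G} : \{0,\dots,\underline{N}-1\} \times \mathbb{U} \to \mathbb{U}$ (propagation over one macro-interval starting at $T_N$) and set $\delta\mathcal{G} = \mathcal{E} - \mathcal{G}$. Assume there exist constants $\varepsilon_{\mathcal G}, C_c, C_d > 0$ such that for all $N$ and all $x, y \in \mathbb{U}$: (i) $\|\delta\mathcal{G}(N,x)\| \le \Delta T\,(1+\|x\|)\,\varepsilon_{\mathcal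 G}$; (ii) $\|\mathcal{G}(N,x)-\mathcal{G}(N,y)\| \le (1+C_c\Delta T)\|x-y\|$; (iii) $\|\delta\mathcal{G}(N,x)-\delta\mathcal{G}(N,y)\| \le C_d\,\Delta T\,\varepsilon_{\mathcal G}\,\|x-y\|$. Let $u(T_0) \in \mathbb{U}$ and $u(T_{N+1}) = \mathcal{E}(N, u(T_N))$. Define the parareal iterates by $y_0^0 = u(T_0)$, $y_0^{N+1} = \mathcal{G}(N, y_0^N)$, and $y_{k+1}^{N+1} = \mathcal{G}(N, y_{k+1}^N) + \mathcal{E}(N, y_k^N) - \mathcal{G}(N, y_k^N)$. Then for every $k \ge 0$, $\max_{0 \le N \le \underline N} \|u(T_N) - y_k^N\| \le \mu\, \frac{\tau^{k+1}}{(k+1)!}$, where $\mu = \frac{e^{C_c T}}{C_d} \max_{0\le N\le \underline N}(1+\|u(T_N)\|)$ and $\tau = C_d\,T\,e^{-C_c \Delta T}\,\varepsilon_{\mathcal G}$. -/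
open Finset

private lemma aux_pow (γ : ℝ) (hγ : 1 ≤ γ) (n k : ℕ) :
    γ * (n.choose (k+1) : ℝ) * γ ^ (n - (k+1)) ≤ (n.choose (k+1) : ℝ) * γ ^ (n - k) := by
  rcases le_or_gt (k+1) n with h | h
  · have : n - k = (n - (k+1)) + 1 := by omega
    rw [this, pow_succ]; ring_nf; exact le_of_eq (by ring)
  · rw [Nat.choose_eq_zero_of_lt h]; simp


theorem parareal_ideal_convergence
    {U : Type*} [NormedAddCommGroup U] [NormedSpace ℝ U] [CompleteSpace U]
    (NN : ℕ) (hNN : 1 ≤ NN) (ΔT : ℝ) (hΔT : 0 < ΔT)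
    (T : ℝ) (hT : T = NN * ΔT)
    (E G : ℕ → U → U)
    (εG Cc Cd : ℝ) (hεG : 0 < εG) (hCc : 0 < Cc) (hCd : 0 < Cd)
    -- (i) accuracy of the coarse solver
    (hacc : ∀ N < NN, ∀ x : U, ‖E N x - G N x‖ ≤ ΔT * (1 + ‖x‖) * εG)
    -- (ii) Lipschitz stability of the coarse solver
    (hlip : ∀ N < NN, ∀ x y : U,
      ‖G N x - G N y‖ ≤ (1 + Cc * ΔT) * ‖x - y‖)
    -- (iii) Lipschitz continuity of the defect δG = E - G
    (hdef : ∀ N < NN, ∀ x y : U,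
      ‖(E N x - G N x) - (E N y - G N y)‖ ≤ Cd * ΔT * εG * ‖x - y‖)
    -- exact trajectory
    (u : ℕ → U) (hu : ∀ N < NN, u (N + 1) = E N (u N))
    -- parareal iterates
    (y : ℕ → ℕ → U)
    (hy00 : y 0 0 = u 0) (hyk0 : ∀ k, y k 0 = u 0)
    (hy0 : ∀ N < NN, y 0 (N + 1) = G N (y 0 N))
    (hyk : ∀ k, ∀ N < NN,
      y (k + 1) (N + 1) = G N (y (k + 1) N) + E N (y k N) - G N (y k N))
    (μ τ : ℝ)
    (hμ : μ = Real.exp (Cc * T) / Cd *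
      ((range (NN + 1)).sup' (nonempty_range_iff.mpr (Nat.succ_ne_zero NN))
        fun N => 1 + ‖u N‖))
    (hτ : τ = Cd * T * Real.exp (-(Cc * ΔT)) * εG) :
    ∀ k : ℕ, ∀ N ≤ NN,
      ‖u N - y k N‖ ≤ μ * τ ^ (k + 1) / (Nat.factorial (k + 1) : ℝ) := by
  set M : ℝ := (range (NN + 1)).sup' (nonempty_range_iff.mpr (Nat.succ_ne_zero NN))
      (fun N => 1 + ‖u N‖) with hMdef
  have hM1 : ∀ N ≤ NN, 1 + ‖u N‖ ≤ M := by
    intro N hN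
    exact Finset.le_sup' (fun N => 1 + ‖u N‖) (mem_range.mpr (Nat.lt_succ_of_le hN))
  have hMpos : 0 < M :=
    lt_of_lt_of_le (by positivity) (hM1 0 (by omega))
  set γ : ℝ := 1 + Cc * ΔT with hγdef
  clear_value M γ
  have hγ1 : (1:ℝ) ≤ γ := by rw [hγdef]; nlinarith
  have hγ0 : (0:ℝ) ≤ γ := by linarith
  -- main estimate
  have key : ∀ k, ∀ N ≤ NN, ‖u N - y k N‖ ≤
      M * εG ^ (k+1) * Cd ^ k * ΔT ^ (k+1) * (N.choose (k+1) : ℝ) * γ ^ (N - (k+1)) := by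
    intro k
    induction k with
    | zero =>
      intro N
      induction N with
      | zero => intro _; rw [hy00]; simp
      | succ n ih =>
        intro hn
        have hn' : n < NN := hn
        have hbn := ih (le_of_lt hn')
        have hM := hM1 n (le_of_lt hn')
        have heq : u (n+1) - y 0 (n+1)
            = (G n (u n) - G n (y 0 n)) + (E n (u n) - G n (u n)) := by
          rw [hu n hn', hy0 n hn']; abel
        have hcalc : ‖u (n+1) - y 0 (n+1)‖ ≤
            γ * (M * εG ^ 1 * Cd ^ 0 * ΔT ^ 1 * (n.choose 1 : ℝ) * γ ^ (n - 1)) + ΔT * M * εG :=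
          calc ‖u (n+1) - y 0 (n+1)‖
              ≤ ‖G n (u n) - G n (y 0 n)‖ + ‖E n (u n) - G n (u n)‖ := by
                rw [heq]; exact norm_add_le _ _
            _ ≤ γ * ‖u n - y 0 n‖ + ΔT * (1 + ‖u n‖) * εG :=
                add_le_add (hlip n hn' _ _) (hacc n hn' _)
            _ ≤ _ := by
                apply add_le_add (mul_le_mul_of_nonneg_left hbn hγ0)
                exact mul_le_mul_of_nonneg_right
                  (mul_le_mul_of_nonneg_left hM (le_of_lt hΔT)) (le_of_lt hεG)
        refine hcalc.trans ?_
        have hA : (0:ℝ) ≤ M * εG * ΔT := by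
          have := hMpos.le; positivity
        have haux : γ * (n.choose 1 : ℝ) * γ ^ (n - 1) ≤ (n.choose 1 : ℝ) * γ ^ n := by
          simpa using aux_pow γ hγ1 n 0
        have H1 := mul_le_mul_of_nonneg_left haux hA
        have h1 : (1:ℝ) ≤ γ ^ n := one_le_pow₀ hγ1
        have H2 := mul_le_mul_of_nonneg_left h1 hA
        have hch : ((n+1).choose 1 : ℝ) = (n.choose 1 : ℝ) + 1 := by
          simp [Nat.choose_one_right]
        rw [show (n+1) - (0+1) = n from by omega, hch]
        calc γ * (M * εG ^ 1 * Cd ^ 0 * ΔT ^ 1 * (n.choose 1 : ℝ) * γ ^ (n - 1)) + ΔT * M * εG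
            = M * εG * ΔT * (γ * (n.choose 1 : ℝ) * γ ^ (n - 1)) + M * εG * ΔT * 1 := by ring
          _ ≤ M * εG * ΔT * ((n.choose 1 : ℝ) * γ ^ n) + M * εG * ΔT * γ ^ n := add_le_add H1 H2
          _ = M * εG ^ (0+1) * Cd ^ 0 * ΔT ^ (0+1) * ((n.choose 1 : ℝ) + 1) * γ ^ n := by ring
    | succ k ihk =>
      intro N
      induction N with
      | zero => intro _; rw [hyk0]; simp
      | succ n ih =>
        intro hn
        have hn' : n < NN := hn
        have hb1 := ih (le_of_lt hn')
        have hb2 := ihk n (le_of_lt hn')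
        simp only [show k+1+1 = k+2 from rfl] at hb1 ⊢
        have heq : u (n+1) - y (k+1) (n+1)
            = (G n (u n) - G n (y (k+1) n))
              + ((E n (u n) - G n (u n)) - (E n (y k n) - G n (y k n))) := by
          rw [hu n hn', hyk k n hn']; abel
        have hcalc : ‖u (n+1) - y (k+1) (n+1)‖ ≤
            γ * (M * εG ^ (k+2) * Cd ^ (k+1) * ΔT ^ (k+2) * (n.choose (k+2) : ℝ) * γ ^ (n - (k+2)))
            + Cd * ΔT * εG * (M * εG ^ (k+1) * Cd ^ k * ΔT ^ (k+1) * (n.choose (k+1) : ℝ) * γ ^ (n - (k+1))) :=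
          calc ‖u (n+1) - y (k+1) (n+1)‖
              ≤ ‖G n (u n) - G n (y (k+1) n)‖
                + ‖(E n (u n) - G n (u n)) - (E n (y k n) - G n (y k n))‖ := by
                rw [heq]; exact norm_add_le _ _
            _ ≤ γ * ‖u n - y (k+1) n‖ + Cd * ΔT * εG * ‖u n - y k n‖ :=
                add_le_add (hlip n hn' _ _) (hdef n hn' _ _)
            _ ≤ _ := add_le_add (mul_le_mul_of_nonneg_left hb1 hγ0)
                (mul_le_mul_of_nonneg_left hb2 (by positivity))
        refine hcalc.trans ?_
        have haux : γ * (n.choose (k+2) : ℝ) * γ ^ (n - (k+2)) ≤ (n.choose (k+2) : ℝ) * γ ^ (n - (k+1)) := by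
          simpa [show k+1+1 = k+2 from rfl] using aux_pow γ hγ1 n (k+1)
        have hA : (0:ℝ) ≤ M * εG ^ (k+2) * Cd ^ (k+1) * ΔT ^ (k+2) := by
          have := hMpos.le; positivity
        have H1 := mul_le_mul_of_nonneg_left haux hA
        have hpascal : ((n+1).choose (k+2) : ℝ) = (n.choose (k+1) : ℝ) + (n.choose (k+2) : ℝ) := by
          rw [Nat.choose_succ_succ]; push_cast; ring
        rw [show (n+1) - (k+2) = n - (k+1) from by omega, hpascal]
        calc γ * (M * εG ^ (k+2) * Cd ^ (k+1) * ΔT ^ (k+2) * (n.choose (k+2) : ℝ) * γ ^ (n - (k+2)))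
              + Cd * ΔT * εG * (M * εG ^ (k+1) * Cd ^ k * ΔT ^ (k+1) * (n.choose (k+1) : ℝ) * γ ^ (n - (k+1)))
            = M * εG ^ (k+2) * Cd ^ (k+1) * ΔT ^ (k+2) * (γ * (n.choose (k+2) : ℝ) * γ ^ (n - (k+2)))
              + M * εG ^ (k+2) * Cd ^ (k+1) * ΔT ^ (k+2) * ((n.choose (k+1) : ℝ) * γ ^ (n - (k+1))) := by ring
          _ ≤ M * εG ^ (k+2) * Cd ^ (k+1) * ΔT ^ (k+2) * ((n.choose (k+2) : ℝ) * γ ^ (n - (k+1)))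
              + M * εG ^ (k+2) * Cd ^ (k+1) * ΔT ^ (k+2) * ((n.choose (k+1) : ℝ) * γ ^ (n - (k+1))) := add_le_add H1 le_rfl
          _ = M * εG ^ (k+2) * Cd ^ (k+1) * ΔT ^ (k+2) * ((n.choose (k+1) : ℝ) + (n.choose (k+2) : ℝ)) * γ ^ (n - (k+1)) := by ring
  -- conclude
  intro k N hN
  have hkey := key k N hN
  have hμpos : 0 < μ := by
    rw [hμ]; exact mul_pos (div_pos (Real.exp_pos _) hCd) hMpos
  have hTpos : 0 < T := by
    have : (0:ℝ) < NN := by exact_mod_cast hNN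
    rw [hT]; exact mul_pos this hΔT
  have hτpos : 0 < τ := by rw [hτ]; positivity
  have hfac : ((Nat.factorial (k+1) : ℕ) : ℝ) ≠ 0 := by
    exact_mod_cast (Nat.factorial_ne_zero (k+1))
  have hRHS : μ * τ ^ (k+1) / (Nat.factorial (k+1) : ℝ)
      = M * εG ^ (k+1) * Cd ^ k * ΔT ^ (k+1) * ((NN:ℝ) ^ (k+1) / (Nat.factorial (k+1) : ℝ))
        * Real.exp (Cc * ΔT * ((NN:ℝ) - (k+1))) := by
    have hexp : Real.exp (Cc * (NN * ΔT)) * Real.exp (-(Cc * ΔT)) ^ (k+1)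
        = Real.exp (Cc * ΔT * ((NN:ℝ) - (k+1))) := by
      rw [← Real.exp_nat_mul, ← Real.exp_add]
      congr 1
      push_cast
      try ring
    rw [hμ, hτ, hT, ← hexp]
    field_simp
    ring
  rcases lt_or_ge N (k+1) with h | h
  · have hz : (N.choose (k+1) : ℝ) = 0 := by
      rw [Nat.choose_eq_zero_of_lt h]; simp
    have h0 : ‖u N - y k N‖ ≤ 0 := by
      calc ‖u N - y k N‖ ≤ _ := hkey
        _ = 0 := by rw [hz]; ring
    have hr : 0 ≤ μ * τ ^ (k+1) / (Nat.factorial (k+1) : ℝ) := by positivity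
    linarith
  · have hC : (N.choose (k+1) : ℝ) ≤ (NN:ℝ) ^ (k+1) / (Nat.factorial (k+1) : ℝ) := by
      calc (N.choose (k+1) : ℝ) ≤ (N:ℝ) ^ (k+1) / (Nat.factorial (k+1) : ℝ) :=
            Nat.choose_le_pow_div (k+1) N
        _ ≤ _ := by
            gcongr <;> first | exact_mod_cast hN | positivity
    have hkN : k + 1 ≤ NN := le_trans h hN
    have hexp2 : γ ^ (N - (k+1)) ≤ Real.exp (Cc * ΔT * ((NN:ℝ) - (k+1))) := by
      calc γ ^ (N - (k+1)) ≤ Real.exp (Cc * ΔT) ^ (N - (k+1)) := by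
            apply pow_le_pow_left₀ hγ0
            rw [hγdef]
            linarith [Real.add_one_le_exp (Cc * ΔT)]
        _ ≤ Real.exp (Cc * ΔT) ^ (NN - (k+1)) := by
            apply pow_le_pow_right₀ (Real.one_le_exp (by positivity))
            omega
        _ = Real.exp (Cc * ΔT * ((NN:ℝ) - (k+1))) := by
            rw [← Real.exp_nat_mul]
            congr 1
            rw [Nat.cast_sub hkN]
            push_cast
            ring
    rw [hRHS]
    have hK : (0:ℝ) ≤ M * εG ^ (k+1) * Cd ^ k * ΔT ^ (k+1) := by
      have := hMpos.le; positivity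
    calc ‖u N - y k N‖ ≤ _ := hkey
      _ ≤ M * εG ^ (k+1) * Cd ^ k * ΔT ^ (k+1) * ((NN:ℝ) ^ (k+1) / (Nat.factorial (k+1) : ℝ))
          * Real.exp (Cc * ΔT * ((NN:ℝ) - (k+1))) := by
          apply mul_le_mul (mul_le_mul_of_nonneg_left hC hK) hexp2
            (pow_nonneg hγ0 _) (mul_nonneg hK (by positivity))
end

section
/- Under the same hypotheses (i)–(iii) on $\mathcal{E}$, $\mathcal{G}$, $\delta\mathcal{G}$ as in the ideal parareal convergence theorem, consider the perturbed parareal iteration $y_0^0 = u(T_0)$, $y_0^{N+1} = \mathcal{G}(N, y_0^N)$, and $y_{k+1}^{N+1} = \mathcal{G}(N, y_{k+1}^N) + F_k(N, y_k^N) - \mathcal{G}(N, y_k^N)$, where the approximate fine propagators $F_k$ satisfy $\|F_k(N, y_k^N) - \mathcal{E}(N, y_k^N)\| \le \zeta_k\,\Delta T\,(1 + \|y_k^N\|)$ for all $N$, with tolerances $\zeta_k = \frac{\varepsilon_{\mathcal G}^{k+2}}{(k+1)!\,\nu_k}$ and $\nu_k = \frac{\max_{0\le N\le \underline N}(1+\|y_k^N\|)}{\max_{0\le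 N\le \underline N}(1+\|u(T_N)\|)}$. Then for every $k \ge 0$, $\max_{0\le N\le \underline N}\|u(T_N)-y_k^N\| \le \mu\, \frac{\tilde\tau^{\,k+1}}{(k+1)!}$, where $\tilde\tau = \tau + \varepsilon_{\mathcal G}$, $\tau = C_d\,T\,e^{-C_c\Delta T}\varepsilon_{\mathcal G}$, and $\mu = \frac{e^{C_c T}}{C_d}\max_{0\le N\le \underline N}(1+\|u(T_N)\|)$. -/
open Finset

/-- Discrete convolution bound for the parareal error recursion. -/
lemma parareal_conv_bound (β α : ℝ) (hβ : 1 ≤ β) (hα : 0 ≤ α) (S : ℕ → ℝ) (hS : ∀ i, 0 ≤ S i)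
    (NN : ℕ) (e : ℕ → ℕ → ℝ)
    (he0 : ∀ k, e k 0 = 0)
    (hrec0 : ∀ N < NN, e 0 (N + 1) ≤ β * e 0 N + S 0)
    (hrec : ∀ k, ∀ N < NN, e (k + 1) (N + 1) ≤ β * e (k + 1) N + α * e k N + S (k + 1)) :
    ∀ k, ∀ N ≤ NN, e k N ≤ ∑ j ∈ Finset.range (k + 1),
      S (k - j) * α ^ j * (N.choose (j + 1) : ℝ) * β ^ N / β ^ (j + 1) := by
  have hβ0 : (0:ℝ) < β := lt_of_lt_of_le one_pos hβ
  have hβne : β ≠ 0 := ne_of_gt hβ0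
  -- key identity
  have hkey : ∀ k N : ℕ,
      (∑ j ∈ Finset.range (k + 2),
        S (k + 1 - j) * α ^ j * ((N + 1).choose (j + 1) : ℝ) * β ^ (N + 1) / β ^ (j + 1))
      = β * (∑ j ∈ Finset.range (k + 2),
          S (k + 1 - j) * α ^ j * (N.choose (j + 1) : ℝ) * β ^ N / β ^ (j + 1))
        + α * (∑ j ∈ Finset.range (k + 1),
          S (k - j) * α ^ j * (N.choose (j + 1) : ℝ) * β ^ N / β ^ (j + 1))
        + S (k + 1) * β ^ N := by
    intro k N
    have h1 : ∀ j : ℕ, ((N + 1).choose (j + 1) : ℝ) = (N.choose j : ℝ) + (N.choose (j + 1) : ℝ) := by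
      intro j
      rw [Nat.choose_succ_succ]
      push_cast
      ring
    calc (∑ j ∈ Finset.range (k + 2),
          S (k + 1 - j) * α ^ j * ((N + 1).choose (j + 1) : ℝ) * β ^ (N + 1) / β ^ (j + 1))
        = ∑ j ∈ Finset.range (k + 2),
            (β * (S (k + 1 - j) * α ^ j * (N.choose (j + 1) : ℝ) * β ^ N / β ^ (j + 1))
              + S (k + 1 - j) * α ^ j * (N.choose j : ℝ) * β ^ (N + 1) / β ^ (j + 1)) := by
          refine Finset.sum_congr rfl fun j _ => ?_
          rw [h1 j, pow_succ]
          ring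
      _ = β * (∑ j ∈ Finset.range (k + 2),
            S (k + 1 - j) * α ^ j * (N.choose (j + 1) : ℝ) * β ^ N / β ^ (j + 1))
          + ∑ j ∈ Finset.range (k + 2),
            S (k + 1 - j) * α ^ j * (N.choose j : ℝ) * β ^ (N + 1) / β ^ (j + 1) := by
          rw [Finset.sum_add_distrib, Finset.mul_sum]
      _ = β * (∑ j ∈ Finset.range (k + 2),
            S (k + 1 - j) * α ^ j * (N.choose (j + 1) : ℝ) * β ^ N / β ^ (j + 1))
          + α * (∑ j ∈ Finset.range (k + 1),
            S (k - j) * α ^ j * (N.choose (j + 1) : ℝ) * β ^ N / β ^ (j + 1))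
          + S (k + 1) * β ^ N := by
          rw [Finset.sum_range_succ'
            (fun j => S (k + 1 - j) * α ^ j * (N.choose j : ℝ) * β ^ (N + 1) / β ^ (j + 1)) (k + 1)]
          have h2 : ∀ j : ℕ,
              S (k + 1 - (j + 1)) * α ^ (j + 1) * (N.choose (j + 1) : ℝ) * β ^ (N + 1) / β ^ (j + 1 + 1)
              = α * (S (k - j) * α ^ j * (N.choose (j + 1) : ℝ) * β ^ N / β ^ (j + 1)) := by
            intro j
            rw [Nat.succ_sub_succ, pow_succ β (N), pow_succ β (j + 1)]
            field_simp
            ring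
          rw [Finset.sum_congr rfl fun j _ => h2 j, ← Finset.mul_sum]
          have h3 : S (k + 1 - 0) * α ^ 0 * (N.choose 0 : ℝ) * β ^ (N + 1) / β ^ (0 + 1)
              = S (k + 1) * β ^ N := by
            simp [pow_succ, mul_div_assoc, mul_div_cancel_right₀ _ hβne]
          rw [h3]
          ring
  -- key identity for k = 0
  have hkey0 : ∀ N : ℕ,
      (∑ j ∈ Finset.range 1,
        S (0 - j) * α ^ j * ((N + 1).choose (j + 1) : ℝ) * β ^ (N + 1) / β ^ (j + 1))
      = β * (∑ j ∈ Finset.range 1,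
          S (0 - j) * α ^ j * (N.choose (j + 1) : ℝ) * β ^ N / β ^ (j + 1))
        + S 0 * β ^ N := by
    intro N
    simp only [Finset.sum_range_one, Nat.sub_zero, pow_zero, Nat.choose_one_right, pow_one]
    rw [pow_succ]
    push_cast
    field_simp
    simp only [Nat.choose_one_right, zero_add]
    push_cast
    ring
  intro k
  induction k with
  | zero =>
    intro N
    induction N with
    | zero => intro _; simp [he0]
    | succ n ih =>
      intro hN
      have hn : n < NN := hN
      have ihn := ih (le_of_lt hn)
      calc e 0 (n + 1) ≤ β * e 0 n + S 0 := hrec0 n hn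
        _ ≤ β * (∑ j ∈ Finset.range 1,
              S (0 - j) * α ^ j * (n.choose (j + 1) : ℝ) * β ^ n / β ^ (j + 1)) + S 0 * β ^ n := by
            gcongr
            exact le_mul_of_one_le_right (hS 0) (one_le_pow₀ hβ)
        _ = _ := (hkey0 n).symm
  | succ k ihk =>
    intro N
    induction N with
    | zero => intro _; simp [he0]
    | succ n ih =>
      intro hN
      have hn : n < NN := hN
      have ihn := ih (le_of_lt hn)
      calc e (k + 1) (n + 1) ≤ β * e (k + 1) n + α * e k n + S (k + 1) := hrec k n hn
        _ ≤ β * (∑ j ∈ Finset.range (k + 2),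
              S (k + 1 - j) * α ^ j * (n.choose (j + 1) : ℝ) * β ^ n / β ^ (j + 1))
            + α * (∑ j ∈ Finset.range (k + 1),
              S (k - j) * α ^ j * (n.choose (j + 1) : ℝ) * β ^ n / β ^ (j + 1))
            + S (k + 1) * β ^ n := by
            gcongr
            · exact ihk n (le_of_lt hn)
            · exact le_mul_of_one_le_right (hS (k + 1)) (one_le_pow₀ hβ)
        _ = _ := (hkey (k) n).symm


theorem parareal_adaptive_convergence
    {U : Type*} [NormedAddCommGroup U] [NormedSpace ℝ U] [CompleteSpace U]
    (NN : ℕ) (hNN : 1 ≤ NN) (ΔT : ℝ) (hΔT : 0 < ΔT)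
    (T : ℝ) (hT : T = NN * ΔT)
    (E G : ℕ → U → U)
    (εG Cc Cd : ℝ) (hεG : 0 < εG) (hCc : 0 < Cc) (hCd : 0 < Cd)
    (hacc : ∀ N < NN, ∀ x : U, ‖E N x - G N x‖ ≤ ΔT * (1 + ‖x‖) * εG)
    (hlip : ∀ N < NN, ∀ x y : U,
      ‖G N x - G N y‖ ≤ (1 + Cc * ΔT) * ‖x - y‖)
    (hdef : ∀ N < NN, ∀ x y : U,
      ‖(E N x - G N x) - (E N y - G N y)‖ ≤ Cd * ΔT * εG * ‖x - y‖)
    (u : ℕ → U) (hu : ∀ N < NN, u (N + 1) = E N (u N))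
    -- approximate fine propagators, one per parareal iteration
    (F : ℕ → ℕ → U → U)
    -- perturbed parareal iterates
    (y : ℕ → ℕ → U)
    (hy00 : y 0 0 = u 0) (hyk0 : ∀ k, y k 0 = u 0)
    (hy0 : ∀ N < NN, y 0 (N + 1) = G N (y 0 N))
    (hyk : ∀ k, ∀ N < NN,
      y (k + 1) (N + 1) = G N (y (k + 1) N) + F k N (y k N) - G N (y k N))
    -- ratios ν_k and tolerances ζ_k
    (ν ζ : ℕ → ℝ)
    (hν : ∀ k, ν k =
      ((range (NN + 1)).sup' (nonempty_range_iff.mpr (Nat.succ_ne_zero NN))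
          fun N => 1 + ‖y k N‖) /
        ((range (NN + 1)).sup' (nonempty_range_iff.mpr (Nat.succ_ne_zero NN))
          fun N => 1 + ‖u N‖))
    (hζ : ∀ k, ζ k = εG ^ (k + 2) / ((Nat.factorial (k + 1) : ℝ) * ν k))
    -- accuracy of the approximate fine propagations
    (hF : ∀ k, ∀ N < NN,
      ‖F k N (y k N) - E N (y k N)‖ ≤ ζ k * ΔT * (1 + ‖y k N‖))
    (μ τ τ' : ℝ)
    (hμ : μ = Real.exp (Cc * T) / Cd *
      ((range (NN + 1)).sup' (nonempty_range_iff.mpr (Nat.succ_ne_zero NN))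
        fun N => 1 + ‖u N‖))
    (hτ : τ = Cd * T * Real.exp (-(Cc * ΔT)) * εG)
    (hτ' : τ' = τ + εG) :
    ∀ k : ℕ, ∀ N ≤ NN,
      ‖u N - y k N‖ ≤ μ * τ' ^ (k + 1) / (Nat.factorial (k + 1) : ℝ) := by
  have hne : (range (NN + 1)).Nonempty := nonempty_range_iff.mpr (Nat.succ_ne_zero NN)
  set M : ℝ := (range (NN + 1)).sup' hne (fun N => 1 + ‖u N‖) with hM
  set β : ℝ := 1 + Cc * ΔT with hβ
  set α : ℝ := Cd * ΔT * εG with hαdef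
  set S : ℕ → ℝ := fun i => ΔT * εG ^ (i + 1) * M / (Nat.factorial i : ℝ) with hSdef
  have hM1 : (1 : ℝ) ≤ M := by
    have : 1 + ‖u 0‖ ≤ M := by
      rw [hM]
      exact Finset.le_sup' (fun N => 1 + ‖u N‖) (Finset.mem_range.mpr (Nat.succ_pos NN))
    have h0 : (0:ℝ) ≤ ‖u 0‖ := norm_nonneg _
    linarith
  have hM0 : (0 : ℝ) < M := lt_of_lt_of_le one_pos hM1
  have hMle : ∀ N ≤ NN, 1 + ‖u N‖ ≤ M := by
    intro N hN
    rw [hM]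
    exact Finset.le_sup' (fun N => 1 + ‖u N‖) (Finset.mem_range.mpr (Nat.lt_succ_of_le hN))
  have hβ1 : (1 : ℝ) ≤ β := by
    have : 0 < Cc * ΔT := mul_pos hCc hΔT
    simp only [hβ]; linarith
  have hα0 : (0:ℝ) ≤ α := by positivity
  have hS0 : ∀ i, 0 ≤ S i := fun i => by
    have := Nat.factorial_pos i
    positivity
  -- error recursion
  have he0 : ∀ k, ‖u 0 - y k 0‖ = 0 := fun k => by rw [hyk0 k, sub_self, norm_zero]
  have hrec0 : ∀ N < NN, ‖u (N+1) - y 0 (N+1)‖ ≤ β * ‖u N - y 0 N‖ + S 0 := by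
    intro N hN
    have hdecomp : u (N+1) - y 0 (N+1)
        = (G N (u N) - G N (y 0 N)) + (E N (u N) - G N (u N)) := by
      rw [hu N hN, hy0 N hN]; abel
    calc ‖u (N+1) - y 0 (N+1)‖
        ≤ ‖G N (u N) - G N (y 0 N)‖ + ‖E N (u N) - G N (u N)‖ := by
          rw [hdecomp]; exact norm_add_le _ _
      _ ≤ β * ‖u N - y 0 N‖ + ΔT * (1 + ‖u N‖) * εG := by
          gcongr
          · exact hlip N hN _ _
          · exact hacc N hN _
      _ ≤ β * ‖u N - y 0 N‖ + S 0 := by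
          have h1 : ΔT * (1 + ‖u N‖) * εG ≤ ΔT * M * εG := by
            gcongr
            exact hMle N (le_of_lt hN)
          have h2 : ΔT * M * εG = S 0 := by
            simp [hSdef, Nat.factorial]
            ring
          linarith
  have hrec : ∀ k, ∀ N < NN, ‖u (N+1) - y (k+1) (N+1)‖
      ≤ β * ‖u N - y (k+1) N‖ + α * ‖u N - y k N‖ + S (k+1) := by
    intro k N hN
    have hdecomp : u (N+1) - y (k+1) (N+1)
        = (G N (u N) - G N (y (k+1) N))
          + ((E N (u N) - G N (u N)) - (E N (y k N) - G N (y k N)))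
          + (E N (y k N) - F k N (y k N)) := by
      rw [hu N hN, hyk k N hN]; abel
    -- perturbation estimate
    have hyle : 1 + ‖y k N‖
        ≤ (range (NN + 1)).sup' hne (fun N => 1 + ‖y k N‖) :=
      Finset.le_sup' (fun N => 1 + ‖y k N‖) (Finset.mem_range.mpr (Nat.lt_succ_of_lt hN))
    have hsupy1 : (1:ℝ) ≤ (range (NN + 1)).sup' hne (fun N => 1 + ‖y k N‖) := by
      have h0 : 1 + ‖y k 0‖ ≤ (range (NN + 1)).sup' hne (fun N => 1 + ‖y k N‖) :=
        Finset.le_sup' (fun N => 1 + ‖y k N‖) (Finset.mem_range.mpr (Nat.succ_pos NN))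
      have := norm_nonneg (y k 0)
      linarith
    have hν0 : 0 < ν k := by
      rw [hν k]
      exact div_pos (lt_of_lt_of_le one_pos hsupy1) hM0
    have hsupyeq : (range (NN + 1)).sup' hne (fun N => 1 + ‖y k N‖) = ν k * M := by
      rw [hν k]
      field_simp
    have hζval : ζ k * ΔT * (ν k * M) = S (k+1) := by
      rw [hζ k, hSdef]
      have hfne : ((Nat.factorial (k+1) : ℝ)) ≠ 0 := Nat.cast_ne_zero.mpr (Nat.factorial_ne_zero _)
      field_simp
    have hpert : ‖F k N (y k N) - E N (y k N)‖ ≤ S (k+1) := by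
      have h1 := hF k N hN
      have h2 : ζ k * ΔT * (1 + ‖y k N‖) ≤ ζ k * ΔT * (ν k * M) := by
        have hζpos : 0 ≤ ζ k * ΔT := by
          have : 0 < ζ k := by
            rw [hζ k]
            have hfpos : (0:ℝ) < (Nat.factorial (k+1) : ℝ) := by
              exact_mod_cast Nat.factorial_pos _
            positivity
          positivity
        apply mul_le_mul_of_nonneg_left _ hζpos
        rw [← hsupyeq]; exact hyle
      rw [hζval] at h2
      linarith
    calc ‖u (N+1) - y (k+1) (N+1)‖
        ≤ ‖G N (u N) - G N (y (k+1) N)‖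
          + ‖(E N (u N) - G N (u N)) - (E N (y k N) - G N (y k N))‖
          + ‖E N (y k N) - F k N (y k N)‖ := by
          rw [hdecomp]
          exact (norm_add_le _ _).trans (by gcongr ; exact norm_add_le _ _)
      _ ≤ β * ‖u N - y (k+1) N‖ + α * ‖u N - y k N‖ + S (k+1) := by
          gcongr
          · exact hlip N hN _ _
          · exact hdef N hN _ _
          · rw [norm_sub_rev]; exact hpert
  have hmain := parareal_conv_bound β α hβ1 hα0 S hS0 NN (fun k N => ‖u N - y k N‖)
    he0 hrec0 hrec
  -- final estimate of the bounding sum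
  intro k N hN
  set Ee : ℝ := Real.exp (Cc * ΔT) with hEedef
  have hEe1 : (1:ℝ) ≤ Ee := Real.one_le_exp (by positivity)
  have hEepos : (0:ℝ) < Ee := Real.exp_pos _
  have hEene : Ee ≠ 0 := ne_of_gt hEepos
  have hβ0 : (0:ℝ) ≤ β := le_trans zero_le_one hβ1
  have hβne : β ≠ 0 := ne_of_gt (lt_of_lt_of_le one_pos hβ1)
  have hβE : β ≤ Ee := by
    have := Real.add_one_le_exp (Cc * ΔT)
    rw [hEedef, hβ]; linarith
  have hμ2 : μ = Ee ^ NN / Cd * M := by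
    rw [hμ, hT, hEedef]
    have : Cc * ((NN:ℝ) * ΔT) = (NN:ℕ) * (Cc * ΔT) := by push_cast; ring
    rw [this, Real.exp_nat_mul]
  have hτ2 : τ = Cd * ((NN:ℝ) * ΔT) * Ee⁻¹ * εG := by
    rw [hτ, hT, Real.exp_neg, hEedef]
  have hNNpos : (0:ℝ) < (NN:ℝ) := by exact_mod_cast lt_of_lt_of_le one_pos hNN
  have hμpos : 0 < μ := by rw [hμ2]; positivity
  have hτpos : 0 < τ := by rw [hτ2]; positivity
  have hCdne : Cd ≠ 0 := ne_of_gt hCd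
  calc ‖u N - y k N‖
      ≤ ∑ j ∈ Finset.range (k + 1),
          S (k - j) * α ^ j * (N.choose (j + 1) : ℝ) * β ^ N / β ^ (j + 1) := hmain k N hN
    _ ≤ ∑ j ∈ Finset.range (k + 1),
          μ * τ ^ (j + 1) * εG ^ (k - j)
            / ((Nat.factorial (k - j) : ℝ) * (Nat.factorial (j + 1) : ℝ)) := by
        apply Finset.sum_le_sum
        intro j hj
        have hfkj : (Nat.factorial (k - j) : ℝ) ≠ 0 :=
          Nat.cast_ne_zero.mpr (Nat.factorial_ne_zero _)
        have hfj1 : (Nat.factorial (j + 1) : ℝ) ≠ 0 :=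
          Nat.cast_ne_zero.mpr (Nat.factorial_ne_zero _)
        have hfkjpos : (0:ℝ) < (Nat.factorial (k - j) : ℝ) := by
          exact_mod_cast Nat.factorial_pos _
        have hfj1pos : (0:ℝ) < (Nat.factorial (j + 1) : ℝ) := by
          exact_mod_cast Nat.factorial_pos _
        by_cases hNj : j + 1 ≤ N
        · have e0 : S (k - j) * α ^ j * (N.choose (j + 1) : ℝ) * β ^ N / β ^ (j + 1)
              = S (k - j) * α ^ j * ((N.choose (j + 1) : ℝ) * (β ^ N / β ^ (j + 1))) := by
            ring
          have e1 : (N.choose (j + 1) : ℝ) * (β ^ N / β ^ (j + 1))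
              = (N.choose (j + 1) : ℝ) * β ^ (N - (j + 1)) := by
            rw [pow_sub₀ β hβne hNj]; ring
          have c1 : (N.choose (j + 1) : ℝ) ≤ (NN:ℝ) ^ (j + 1) / (Nat.factorial (j + 1) : ℝ) := by
            calc (N.choose (j + 1) : ℝ) ≤ (N : ℝ) ^ (j + 1) / (Nat.factorial (j + 1) : ℝ) :=
                  Nat.choose_le_pow_div (j + 1) N
              _ ≤ (NN:ℝ) ^ (j + 1) / (Nat.factorial (j + 1) : ℝ) := by
                  gcongr
                  all_goals exact_mod_cast hN
          have c2 : β ^ (N - (j + 1)) ≤ Ee ^ NN / Ee ^ (j + 1) := by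
            rw [div_eq_mul_inv, ← pow_sub₀ Ee hEene (le_trans hNj hN)]
            calc β ^ (N - (j + 1)) ≤ Ee ^ (N - (j + 1)) := pow_le_pow_left₀ hβ0 hβE _
              _ ≤ Ee ^ (NN - (j + 1)) := pow_le_pow_right₀ hEe1 (Nat.sub_le_sub_right hN _)
          have e2 : (N.choose (j + 1) : ℝ) * β ^ (N - (j + 1))
              ≤ ((NN:ℝ) ^ (j + 1) / (Nat.factorial (j + 1) : ℝ)) * (Ee ^ NN / Ee ^ (j + 1)) :=
            mul_le_mul c1 c2 (by positivity) (by positivity)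
          have e3 : S (k - j) * α ^ j
                * (((NN:ℝ) ^ (j + 1) / (Nat.factorial (j + 1) : ℝ)) * (Ee ^ NN / Ee ^ (j + 1)))
              = μ * τ ^ (j + 1) * εG ^ (k - j)
                / ((Nat.factorial (k - j) : ℝ) * (Nat.factorial (j + 1) : ℝ)) := by
            simp only [hSdef, hαdef, hμ2, hτ2]
            field_simp
            rw [div_pow, mul_div_assoc', mul_div_cancel_left₀ _ (pow_ne_zero _ hEene)]
            ring
          rw [e0, e1]
          calc S (k - j) * α ^ j * ((N.choose (j + 1) : ℝ) * β ^ (N - (j + 1)))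
              ≤ S (k - j) * α ^ j
                * (((NN:ℝ) ^ (j + 1) / (Nat.factorial (j + 1) : ℝ)) * (Ee ^ NN / Ee ^ (j + 1))) := by
                have hSα : 0 ≤ S (k - j) * α ^ j := mul_nonneg (hS0 _) (pow_nonneg hα0 _)
                exact mul_le_mul_of_nonneg_left e2 hSα
            _ = _ := e3
        · have hc0 : N.choose (j + 1) = 0 := Nat.choose_eq_zero_of_lt (Nat.lt_of_not_le hNj)
          rw [hc0]
          simp only [Nat.cast_zero, mul_zero, zero_mul, zero_div]
          positivity
    _ ≤ μ * τ' ^ (k + 1) / (Nat.factorial (k + 1) : ℝ) := by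
        have hfk1pos : (0:ℝ) < (Nat.factorial (k + 1) : ℝ) := by
          exact_mod_cast Nat.factorial_pos _
        have step1 : ∑ j ∈ Finset.range (k + 1),
              μ * τ ^ (j + 1) * εG ^ (k - j)
                / ((Nat.factorial (k - j) : ℝ) * (Nat.factorial (j + 1) : ℝ))
            = μ / (Nat.factorial (k + 1) : ℝ) * ∑ j ∈ Finset.range (k + 1),
                τ ^ (j + 1) * εG ^ (k - j) * (((k + 1).choose (j + 1)) : ℝ) := by
          rw [Finset.mul_sum]
          refine Finset.sum_congr rfl fun j hj => ?_
          have hjk : j + 1 ≤ k + 1 :=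
            Nat.succ_le_succ (Nat.lt_succ_iff.mp (Finset.mem_range.mp hj))
          have hcf := Nat.choose_mul_factorial_mul_factorial hjk
          rw [Nat.succ_sub_succ] at hcf
          have hcfR : (((k + 1).choose (j + 1)) : ℝ) * (Nat.factorial (j + 1) : ℝ)
              * (Nat.factorial (k - j) : ℝ) = (Nat.factorial (k + 1) : ℝ) := by
            exact_mod_cast hcf
          have hfkj : (Nat.factorial (k - j) : ℝ) ≠ 0 :=
            Nat.cast_ne_zero.mpr (Nat.factorial_ne_zero _)
          have hfj1 : (Nat.factorial (j + 1) : ℝ) ≠ 0 :=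
            Nat.cast_ne_zero.mpr (Nat.factorial_ne_zero _)
          have hchpos : (0:ℝ) < (((k + 1).choose (j + 1)) : ℝ) := by
            exact_mod_cast Nat.choose_pos hjk
          rw [← hcfR]
          field_simp
        have hsum : ∑ j ∈ Finset.range (k + 1),
              τ ^ (j + 1) * εG ^ (k - j) * (((k + 1).choose (j + 1)) : ℝ)
            ≤ (τ + εG) ^ (k + 1) := by
          have hcongr : ∀ j ∈ Finset.range (k + 1),
              τ ^ (j + 1) * εG ^ (k - j) * (((k + 1).choose (j + 1)) : ℝ)
              = τ ^ (j + 1) * εG ^ (k + 1 - (j + 1)) * (((k + 1).choose (j + 1)) : ℝ) := by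
            intro j _
            rw [Nat.succ_sub_succ]
          calc ∑ j ∈ Finset.range (k + 1),
                τ ^ (j + 1) * εG ^ (k - j) * (((k + 1).choose (j + 1)) : ℝ)
              ≤ (∑ j ∈ Finset.range (k + 1),
                  τ ^ (j + 1) * εG ^ (k + 1 - (j + 1)) * (((k + 1).choose (j + 1)) : ℝ))
                + τ ^ 0 * εG ^ (k + 1 - 0) * (((k + 1).choose 0) : ℝ) := by
                rw [Finset.sum_congr rfl hcongr]
                have h0 : (0:ℝ) ≤ τ ^ 0 * εG ^ (k + 1 - 0) * (((k + 1).choose 0) : ℝ) := by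
                  positivity
                linarith
            _ = ∑ m ∈ Finset.range (k + 2),
                  τ ^ m * εG ^ (k + 1 - m) * (((k + 1).choose m) : ℝ) :=
                (Finset.sum_range_succ'
                  (fun m => τ ^ m * εG ^ (k + 1 - m) * (((k + 1).choose m) : ℝ)) (k + 1)).symm
            _ = (τ + εG) ^ (k + 1) := (add_pow τ εG (k + 1)).symm
        rw [step1, hτ']
        calc μ / (Nat.factorial (k + 1) : ℝ) * ∑ j ∈ Finset.range (k + 1),
              τ ^ (j + 1) * εG ^ (k - j) * (((k + 1).choose (j + 1)) : ℝ)
            ≤ μ / (Nat.factorial (k + 1) : ℝ) * (τ + εG) ^ (k + 1) :=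
              mul_le_mul_of_nonneg_left hsum (by positivity)
          _ = μ * (τ + εG) ^ (k + 1) / (Nat.factorial (k + 1) : ℝ) := by ring
end

section
/- Let $0 < \varepsilon$ and $K \ge 1$, and suppose $\varepsilon \le 1$. With $\zeta_k = \varepsilon^{k+2}/(k+1)!$, one has $\sum_{k=0}^{K-1} \zeta_k^{-1} \le \zeta_{K-1}^{-1}\,(1 + \varepsilon)$ provided $K \ge 2$ and $\varepsilon \le 1/2$. Consequently the ratio of the adaptive parareal cost $\sum_{k=0}^{K-1} \zeta_k^{-1}$ to the classical parareal cost $K\,\zeta_{K-1}^{-1}$ is at most $(1+\varepsilon)/K$. -/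
open Finset

lemma adaptive_aux (ε : ℝ) (hε0 : 0 < ε) (hε1 : ε ≤ 1) :
    ∀ K : ℕ, 2 ≤ K →
      (∑ k ∈ range K, ((Nat.factorial (k + 1) : ℝ) / ε ^ (k + 2))) ≤
        (Nat.factorial K : ℝ) / ε ^ (K + 1) * (1 + ε) := by
  intro K hK
  induction K, hK using Nat.le_induction with
  | base =>
      rw [show (2 : ℕ) = 1 + 1 from rfl, Finset.sum_range_succ, Finset.sum_range_one]
      simp only [Nat.factorial]
      push_cast
      have h1 : (2:ℝ) / ε ^ 3 * (1 + ε) = 2 / ε ^ 3 + 2 / ε ^ 2 := by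
        field_simp
      have h2 : (1:ℝ) / ε ^ 2 ≤ 2 / ε ^ 2 := by gcongr <;> norm_num
      rw [h1]
      linarith
  | succ K hK ih =>
      rw [Finset.sum_range_succ]
      have hfac : (Nat.factorial (K + 1) : ℝ) = (K + 1) * Nat.factorial K := by
        rw [Nat.factorial_succ]; push_cast; ring
      have hpow : ε ^ (K + 1 + 1) = ε ^ (K + 1) * ε := by ring
      have hE : (0:ℝ) < ε ^ (K + 1) := pow_pos hε0 _
      have hA : (0:ℝ) < Nat.factorial K := by exact_mod_cast Nat.factorial_pos K
      have hK1 : (1:ℝ) + ε ≤ (K : ℝ) + 1 := by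
        have : (2:ℝ) ≤ K := by exact_mod_cast hK
        linarith
      calc (∑ k ∈ range K, ((Nat.factorial (k + 1) : ℝ) / ε ^ (k + 2)))
            + (Nat.factorial (K + 1) : ℝ) / ε ^ (K + 2)
          ≤ (Nat.factorial K : ℝ) / ε ^ (K + 1) * (1 + ε)
            + (Nat.factorial (K + 1) : ℝ) / ε ^ (K + 2) := by linarith
        _ ≤ (Nat.factorial (K + 1) : ℝ) / ε ^ (K + 1 + 1) * (1 + ε) := by
            rw [hfac, show K + 2 = K + 1 + 1 from rfl, hpow]
            set A := (Nat.factorial K : ℝ)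
            set E := ε ^ (K + 1)
            have h1 : ((K:ℝ) + 1) * A / (E * ε) * (1 + ε)
                = ((K:ℝ) + 1) * A / (E * ε) + ((K:ℝ) + 1) * A / E := by
              field_simp
            have h2 : A / E * (1 + ε) ≤ ((K:ℝ) + 1) * A / E := by
              rw [div_mul_eq_mul_div]
              have h2' : A * (1 + ε) ≤ ((K:ℝ) + 1) * A := by nlinarith
              exact (div_le_div_iff_of_pos_right hE).mpr h2'
            rw [h1]
            linarith

theorem adaptive_cost_ratio
    (ε : ℝ) (hε0 : 0 < ε) (hε1 : ε ≤ 1) (K : ℕ) (hK : 2 ≤ K) (hε2 : ε ≤ 1 / 2)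
    (ζ : ℕ → ℝ) (hζ : ∀ k, ζ k = ε ^ (k + 2) / (Nat.factorial (k + 1) : ℝ)) :
    (∑ k ∈ range K, (ζ k)⁻¹) ≤ (ζ (K - 1))⁻¹ * (1 + ε) ∧
      (∑ k ∈ range K, (ζ k)⁻¹) / (K * (ζ (K - 1))⁻¹) ≤ (1 + ε) / K := by
  have hinv : ∀ k, (ζ k)⁻¹ = (Nat.factorial (k + 1) : ℝ) / ε ^ (k + 2) := by
    intro k
    rw [hζ k, inv_div]
  have hK1 : K - 1 + 1 = K := by omega
  have hK2 : K - 1 + 2 = K + 1 := by omega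
  have hmain : (∑ k ∈ range K, (ζ k)⁻¹) ≤ (ζ (K - 1))⁻¹ * (1 + ε) := by
    have := adaptive_aux ε hε0 hε1 K hK
    simp only [hinv, hK1, hK2]
    exact this
  refine ⟨hmain, ?_⟩
  have hζpos : 0 < (ζ (K - 1))⁻¹ := by
    rw [hinv]; positivity
  have hKpos : (0:ℝ) < K := by
    have : 0 < K := by omega
    exact_mod_cast this
  have hden : (0:ℝ) < K * (ζ (K - 1))⁻¹ := mul_pos hKpos hζpos
  calc (∑ k ∈ range K, (ζ k)⁻¹) / (K * (ζ (K - 1))⁻¹)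
      ≤ ((ζ (K - 1))⁻¹ * (1 + ε)) / (K * (ζ (K - 1))⁻¹) := by
        gcongr
    _ = (1 + ε) / K := by
        rw [mul_comm ((K:ℝ)) _, mul_div_mul_left _ _ (ne_of_gt hζpos)]
end

section
/- Let $\alpha, \beta, \gamma \ge 0$ and let $(e_k^N)$ satisfy $e_k^0 = 0$ for all $k \ge 0$, $e_0^N = \beta e_0^{N-1} + \gamma$ for $N \ge 1$, and $e_k^N = \alpha e_{k-1}^{N-1} + \beta e_k^{N-1}$ for $k, N \ge 1$. Then for every $k \ge 0$ the generating function $\rho_k(\xi) = \sum_{N \ge 0} e_k^N \xi^N$ (a formal power series; the sum is well-defined since each coefficient is a finite expression) satisfies the closed form $\rho_k(\xi) = \gamma\,\alpha^k\, \frac{\xi^{k+1}}{(1-\xi)(1-\beta\xi)^{k+1}}$, meaning $\rho_k(\xi)\,(1-\xi)(1-\beta\xi)^{k+1} = \gamma\,\alpha^k\,\xi^{k+1}$ in $\mathbb{R}[[\xi]]$. -/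
open PowerSeries

private lemma coeff_mul_one_sub_succ (f : PowerSeries ℝ) (b : ℝ) (n : ℕ) :
    (PowerSeries.coeff (n + 1)) (f * (1 - PowerSeries.C b * PowerSeries.X))
      = (PowerSeries.coeff (n + 1)) f - b * (PowerSeries.coeff n) f := by
  rw [mul_sub, mul_one, map_sub, mul_left_comm, PowerSeries.coeff_C_mul,
    PowerSeries.coeff_succ_mul_X]

private lemma coeff_mul_one_sub_zero (f : PowerSeries ℝ) (b : ℝ) :
    (PowerSeries.coeff 0) (f * (1 - PowerSeries.C b * PowerSeries.X))
      = (PowerSeries.coeff 0) f := by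
  rw [mul_sub, mul_one, map_sub, mul_left_comm, PowerSeries.coeff_C_mul,
    PowerSeries.coeff_zero_mul_X, mul_zero, sub_zero]

private lemma one_sub_X_mul_ones :
    (PowerSeries.mk fun _ : ℕ => (1 : ℝ)) * (1 - PowerSeries.X) = 1 := by
  have h : (1 : PowerSeries ℝ) - PowerSeries.X = 1 - PowerSeries.C 1 * PowerSeries.X := by
    rw [map_one, one_mul]
  rw [h]
  ext n
  cases n with
  | zero => simp [coeff_mul_one_sub_zero]
  | succ n => rw [coeff_mul_one_sub_succ]; simp

theorem parareal_generating_function_closed_form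
    (α β γ : ℝ)
    (e : ℕ → ℕ → ℝ)
    (h0 : ∀ k, e k 0 = 0)
    (hrec0 : ∀ N, e 0 (N + 1) = β * e 0 N + γ)
    (hrec : ∀ k N, e (k + 1) (N + 1) = α * e k N + β * e (k + 1) N) :
    ∀ k : ℕ,
      (PowerSeries.mk fun N : ℕ => e k N) *
          ((1 - PowerSeries.X) *
            (1 - PowerSeries.C β * PowerSeries.X) ^ (k + 1))
        = PowerSeries.C (γ * α ^ k) * PowerSeries.X ^ (k + 1) := by
  -- key: ρ₀ * (1 - βX) = γ X * ones
  have base : (PowerSeries.mk fun N : ℕ => e 0 N) * (1 - PowerSeries.C β * PowerSeries.X)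
      = PowerSeries.C γ * PowerSeries.X * (PowerSeries.mk fun _ : ℕ => (1 : ℝ)) := by
    ext n
    cases n with
    | zero =>
      rw [coeff_mul_one_sub_zero]
      simp [h0, mul_right_comm, PowerSeries.coeff_zero_mul_X]
    | succ n =>
      rw [coeff_mul_one_sub_succ, mul_right_comm, PowerSeries.coeff_succ_mul_X, PowerSeries.coeff_C_mul]
      simp [hrec0 n]
  have step : ∀ k, (PowerSeries.mk fun N : ℕ => e (k + 1) N) *
      (1 - PowerSeries.C β * PowerSeries.X)
      = PowerSeries.C α * PowerSeries.X * (PowerSeries.mk fun N : ℕ => e k N) := by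
    intro k
    ext n
    cases n with
    | zero =>
      rw [coeff_mul_one_sub_zero]
      simp [h0, mul_right_comm, PowerSeries.coeff_zero_mul_X]
    | succ n =>
      rw [coeff_mul_one_sub_succ, mul_right_comm, PowerSeries.coeff_succ_mul_X, PowerSeries.coeff_C_mul]
      simp [hrec k n]
  intro k
  induction k with
  | zero =>
    have : (PowerSeries.mk fun N : ℕ => e 0 N) *
        ((1 - PowerSeries.X) * (1 - PowerSeries.C β * PowerSeries.X) ^ 1)
        = PowerSeries.C γ * PowerSeries.X *
          ((PowerSeries.mk fun _ : ℕ => (1 : ℝ)) * (1 - PowerSeries.X)) := by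
      rw [pow_one]
      calc (PowerSeries.mk fun N : ℕ => e 0 N) *
            ((1 - PowerSeries.X) * (1 - PowerSeries.C β * PowerSeries.X))
          = (PowerSeries.mk fun N : ℕ => e 0 N) *
            (1 - PowerSeries.C β * PowerSeries.X) * (1 - PowerSeries.X) := by ring
        _ = PowerSeries.C γ * PowerSeries.X *
            ((PowerSeries.mk fun _ : ℕ => (1 : ℝ)) * (1 - PowerSeries.X)) := by
            rw [base]; ring
    rw [this, one_sub_X_mul_ones]
    simp [pow_one]
  | succ k ih =>
    calc (PowerSeries.mk fun N : ℕ => e (k + 1) N) *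
          ((1 - PowerSeries.X) * (1 - PowerSeries.C β * PowerSeries.X) ^ (k + 1 + 1))
        = (PowerSeries.mk fun N : ℕ => e (k + 1) N) *
            (1 - PowerSeries.C β * PowerSeries.X) *
            ((1 - PowerSeries.X) * (1 - PowerSeries.C β * PowerSeries.X) ^ (k + 1)) := by
          ring
      _ = PowerSeries.C α * PowerSeries.X *
            ((PowerSeries.mk fun N : ℕ => e k N) *
            ((1 - PowerSeries.X) * (1 - PowerSeries.C β * PowerSeries.X) ^ (k + 1))) := by
          rw [step]; ring
      _ = PowerSeries.C α * PowerSeries.X *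
            (PowerSeries.C (γ * α ^ k) * PowerSeries.X ^ (k + 1)) := by rw [ih]
      _ = PowerSeries.C (γ * α ^ (k + 1)) * PowerSeries.X ^ (k + 1 + 1) := by
          simp only [map_mul, pow_succ, map_pow]; ring
end
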